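/- Let G be a finite group and H a normal subgroup of G. If the quotient group G/H has a k-fold factorization of the form (a_1, ..., a_k), then for every position j with 0 ≤ j ≤ k the group G has a (k+1)-fold factorization of the form (a_1, ..., a_j, |H|, a_{j+1}, ..., a_k), i.e., with |H| inserted in any position among the a_i. -/

import Mathlib

open Pointwise

/-- A finite group `G` has a `k`-fold factorization of the form `(a 0, …, a (k-1))`:
there are subsets `A 0, …, A (k-1)` of `G` with `|A i| = a i`, `|G| = a 0 ⋯ a (k-1)`,
and the setwise product `A 0 ⋯ A (k-1)` equals `G`. -/
def HasFactorization (G : Type*) [Group G] {k : ℕ} (a : Fin k → ℕ) : Prop :=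
  ∃ A : Fin k → Set G,
    (∀ i, Nat.card (A i) = a i) ∧
    Nat.card G = ∏ i, a i ∧
    (List.ofFn A).prod = (Set.univ : Set G)

private lemma insertNth_succ_aux {M : Type*} {k : ℕ} (i : Fin (k + 1)) (x : M)
    (f : Fin (k + 1) → M) :
    Fin.insertNth i.succ x f
      = Fin.cons (α := fun _ : Fin (k + 2) => M) (f 0)
          (Fin.insertNth (α := fun _ : Fin (k + 1) => M) i x (f ∘ Fin.succ)) := by
  ext t
  refine Fin.cases ?_ (fun t => ?_) t
  · conv_lhs => rw [show (0 : Fin (k + 2)) = i.succ.succAbove 0 from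
      (Fin.succ_succAbove_zero i).symm]
    rw [Fin.insertNth_apply_succAbove, Fin.cons_zero]
  · rw [show Fin.cons (α := fun _ : Fin (k + 2) => M) (f 0)
          (Fin.insertNth (α := fun _ : Fin (k + 1) => M) i x (f ∘ Fin.succ)) t.succ
        = Fin.insertNth (α := fun _ : Fin (k + 1) => M) i x (f ∘ Fin.succ) t from rfl]
    refine Fin.succAboveCases i ?_ (fun s => ?_) t
    · rw [Fin.insertNth_apply_same, Fin.insertNth_apply_same]
    · rw [Fin.insertNth_apply_succAbove, ← Fin.succ_succAbove_succ,
        Fin.insertNth_apply_succAbove]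
      rfl

private lemma central_ofFn_insertNth {M : Type*} [Monoid M] (x : M)
    (hx : ∀ y : M, x * y = y * x) :
    ∀ {k : ℕ} (j : Fin (k + 1)) (f : Fin k → M),
      (List.ofFn (j.insertNth x f)).prod = x * (List.ofFn f).prod := by
  intro k
  induction k with
  | zero =>
    intro j f
    have : j = 0 := Fin.ext (by omega)
    subst this
    simp [Fin.insertNth_zero']
  | succ k ih =>
    intro j f
    refine Fin.cases ?_ (fun i => ?_) j
    · simp [Fin.insertNth_zero']
    · rw [insertNth_succ_aux, List.ofFn_succ]
      simp only [Fin.cons_zero, Fin.cons_succ]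
      rw [List.prod_cons, ih i (f ∘ Fin.succ), ← mul_assoc, ← hx (f 0), mul_assoc,
        List.ofFn_succ, List.prod_cons]
      rfl

/-- Let `G` be a finite group and `H` a normal subgroup of `G`. If the quotient
`G ⧸ H` has a `k`-fold factorization of the form `(a 1, …, a k)`, then for every
position `j` the group `G` has a `(k+1)`-fold factorization obtained by inserting
`|H|` at position `j` among the `a i`. -/
theorem hasFactorization_of_quotient (G : Type*) [Group G] [Finite G]
    (H : Subgroup G) [H.Normal] {k : ℕ} (a : Fin k → ℕ)
    (h : HasFactorization (G ⧸ H) a) (j : Fin (k + 1)) :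
    HasFactorization G (j.insertNth (Nat.card H) a) := by
  obtain ⟨A, hcard, htot, hprod⟩ := h
  -- lift the factors via coset representatives
  set B : Fin k → Set G := fun i => Quotient.out '' A i with hB
  have houtinj : Function.Injective (Quotient.out : G ⧸ H → G) := Quotient.out_injective
  -- H is central in Set G
  have hcomm : ∀ S : Set G, (↑H : Set G) * S = S * (↑H : Set G) := by
    intro S
    ext g
    simp only [Set.mem_mul]
    constructor
    · rintro ⟨h₁, hh₁, s, hs, rfl⟩
      exact ⟨s, hs, s⁻¹ * h₁ * s, by
        simpa using ‹H.Normal›.conj_mem h₁ hh₁ s⁻¹, by group⟩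
    · rintro ⟨s, hs, h₁, hh₁, rfl⟩
      exact ⟨s * h₁ * s⁻¹, ‹H.Normal›.conj_mem h₁ hh₁ s, s, hs, by group⟩
  refine ⟨j.insertNth (↑H : Set G) B, ?_, ?_, ?_⟩
  · intro i
    refine Fin.succAboveCases j ?_ (fun s => ?_) i
    · simp only [Fin.insertNth_apply_same]
      exact Nat.card_congr (Equiv.refl _)
    · simp only [Fin.insertNth_apply_succAbove]
      rw [hB]
      rw [Nat.card_image_of_injective houtinj]
      exact hcard s
  · rw [Fin.prod_univ_succAbove _ j]
    simp only [Fin.insertNth_apply_same, Fin.insertNth_apply_succAbove]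
    rw [Subgroup.card_eq_card_quotient_mul_card_subgroup H, htot, mul_comm]
  · rw [central_ofFn_insertNth _ hcomm j B]
    -- image of the product under the quotient map
    have himg : (QuotientGroup.mk' H : G → G ⧸ H) '' (List.ofFn B).prod = Set.univ := by
      rw [Set.image_list_prod (QuotientGroup.mk' H)]
      have : (List.ofFn B).map (fun s => (QuotientGroup.mk' H) '' s) = List.ofFn A := by
        rw [List.map_ofFn]
        congr 1
        funext i
        simp only [Function.comp, hB, Set.image_image]
        ext q
        constructor
        · rintro ⟨y, hy, rfl⟩
          simpa [QuotientGroup.mk'_apply, QuotientGroup.out_eq'] using hy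
        · intro hq
          exact ⟨q, hq, by simp [QuotientGroup.mk'_apply, QuotientGroup.out_eq']⟩
      rw [this, hprod]
    ext g
    simp only [Set.mem_univ, iff_true]
    have hg : QuotientGroup.mk' H g ∈ (QuotientGroup.mk' H : G → G ⧸ H) '' (List.ofFn B).prod := by
      rw [himg]; trivial
    obtain ⟨b, hb, hbg⟩ := hg
    simp only [QuotientGroup.mk'_apply] at hbg
    rw [hcomm]
    refine ⟨b, hb, b⁻¹ * g, ?_, by group⟩
    exact (QuotientGroup.eq).mp hbg
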